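/- Let n ≥ 4 and let I be the set of all rows of the n−2 row-blocks [1,2], [2,3], …, [n−2,n−1] of the Alexander matrix M_{n−1}. Then det M_{n−1}^I = ((1 − z)·(1 − t z²)·(1 + t z³))^{n−2}·(1 − z + z²)^{(n−3)(n−2)} in ℤ[t,z]. -/

import Mathlib

set_option maxHeartbeats 1000000
set_option maxRecDepth 2000


open Matrix MvPolynomial

/-- The polynomial ring ℤ[t,z] in two commuting variables. -/
noncomputable abbrev Rtz : Type := MvPolynomial (Fin 2) ℤ

/-- The variable `t` of ℤ[t,z]. -/
noncomputable def tv : Rtz := MvPolynomial.X 0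

/-- The variable `z` of ℤ[t,z]. -/
noncomputable def zv : Rtz := MvPolynomial.X 1

/-- The Tong–Yang–Ma matrix ρ_i (1-based `i`, `1 ≤ i ≤ n-1`): the identity matrix except for a
2×2 block `[[0,1],[t,0]]` occupying rows and columns `i-1` and `i` (0-based indexing), i.e.
rows and columns `i` and `i+1` in 1-based indexing. -/
noncomputable def tymρ (n : ℕ) (i : ℕ) : Matrix (Fin n) (Fin n) Rtz :=
  Matrix.of fun p q =>
    if (p : ℕ) + 1 = i ∧ (q : ℕ) = i then 1
    else if (p : ℕ) = i ∧ (q : ℕ) + 1 = i then tv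
    else if (p : ℕ) = (q : ℕ) ∧ (p : ℕ) + 1 ≠ i ∧ (p : ℕ) ≠ i then 1
    else 0

/-- The `n × n` block of the Alexander matrix of the Artin presentation of `B_n` associated
with the Tong–Yang–Ma representation, in the row-block of the relation `[i,j]`
(`1 ≤ i < j ≤ n-1`, 1-based) and the column-block `c` (`1 ≤ c ≤ n-2`, 1-based). -/
noncomputable def alexBlock (n : ℕ) (i j c : ℕ) : Matrix (Fin n) (Fin n) Rtz :=
  if j = i + 1 then
    if c = i then 1 - zv • tymρ n (i + 1) + zv ^ 2 • (tymρ n i * tymρ n (i + 1))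
    else if c = i + 1 then zv • tymρ n i - zv ^ 2 • (tymρ n (i + 1) * tymρ n i) - 1
    else 0
  else
    if c = i then 1 - zv • tymρ n j
    else if c = j then zv • tymρ n i - 1
    else 0

/-- The row index set of the Alexander matrix `M_{n-1}`: a pair of a relation `[i,j]`
(`1 ≤ i < j ≤ n-1`, recorded 0-based as elements of `Fin (n-1)`) and a row `Fin n`
within the corresponding row-block. -/
def AlexRow (n : ℕ) : Type := {p : Fin (n - 1) × Fin (n - 1) // p.1 < p.2} × Fin n

/-- The Alexander matrix `M_{n-1}` of the Artin presentation of the braid group `B_n`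
associated with the Tong–Yang–Ma representation `σ_i ↦ ρ_i` and the abelianization
`σ_i ↦ z`, with the column-block corresponding to the generator `σ_{n-1}` removed.
Columns are indexed by pairs (column-block `Fin (n-2)` (0-based), column `Fin n` within
the block). -/
noncomputable def alexM (n : ℕ) : Matrix (AlexRow n) (Fin (n - 2) × Fin n) Rtz :=
  fun r c => alexBlock n ((r.1.1.1 : ℕ) + 1) ((r.1.1.2 : ℕ) + 1) ((c.1 : ℕ) + 1) r.2 c.2


lemma tymρ_row (n k : ℕ) (hk : k + 2 ≤ n) (p r : Fin n) :
    tymρ n (k + 1) p r =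
      if r = (if (p : ℕ) = k then (⟨k + 1, by omega⟩ : Fin n)
              else if (p : ℕ) = k + 1 then ⟨k, by omega⟩ else p)
      then (if (p : ℕ) = k + 1 then tv else 1) else 0 := by
  simp only [tymρ, Matrix.of_apply]
  split_ifs <;> simp_all [Fin.ext_iff] <;> omega

lemma tym_mul (n k : ℕ) (h : k + 3 ≤ n) :
    tymρ n (k+1) * tymρ n (k+2) = Matrix.of fun p q : Fin n =>
      if (p:ℕ) = k ∧ (q:ℕ) = k+2 then 1
      else if (p:ℕ) = k+1 ∧ (q:ℕ) = k then tv
      else if (p:ℕ) = k+2 ∧ (q:ℕ) = k+1 then tv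
      else if (p:ℕ) = (q:ℕ) ∧ (p:ℕ) ≠ k ∧ (p:ℕ) ≠ k+1 ∧ (p:ℕ) ≠ k+2 then 1
      else 0 := by
  apply Matrix.ext; intro p q
  rw [Matrix.mul_apply, Matrix.of_apply]
  have e : tymρ n (k+2) = tymρ n ((k+1)+1) := rfl
  simp only [tymρ_row n k (by omega), ite_mul, zero_mul, Finset.sum_ite_eq,
    Finset.mem_univ, if_true, e, Finset.sum_ite_eq', tymρ_row n (k+1) (by omega)]
  by_cases hp0 : (p:ℕ) = k
  · simp only [hp0]
    simp only [Fin.ext_iff]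
    simp
    try split_ifs <;> simp_all <;> omega
  · by_cases hp1 : (p:ℕ) = k+1
    · simp only [hp1, hp0]
      simp only [Fin.ext_iff]
      have hkk : k ≠ k+1+1 := by omega
      simp [hp0, hkk, Fin.ext_iff]
    · by_cases hp2 : (p:ℕ) = k+2
      · simp only [hp2]
        simp only [Fin.ext_iff]
        simp [hp0, hp1]
        try split_ifs <;> simp_all <;> omega
      · simp only [Fin.ext_iff]
        simp [hp0, hp1, hp2]
        simp [eq_comm]

noncomputable def Aex (n k : ℕ) : Matrix (Fin n) (Fin n) Rtz :=
  Matrix.of fun p q =>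
    if (p:ℕ) = k ∧ (q:ℕ) = k then 1 - zv
    else if (p:ℕ) = k ∧ (q:ℕ) = k+2 then zv^2
    else if (p:ℕ) = k+1 ∧ (q:ℕ) = k+1 then 1
    else if (p:ℕ) = k+1 ∧ (q:ℕ) = k then tv*zv^2
    else if (p:ℕ) = k+1 ∧ (q:ℕ) = k+2 then -zv
    else if (p:ℕ) = k+2 ∧ (q:ℕ) = k+1 then tv*zv^2 - tv*zv
    else if (p:ℕ) = k+2 ∧ (q:ℕ) = k+2 then 1
    else if (p:ℕ) = (q:ℕ) then 1 - zv + zv^2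
    else 0

lemma blockA (n k : ℕ) (h : k + 3 ≤ n) :
    alexBlock n (k+1) (k+2) (k+1) = Aex n k := by
  have e2 : k + 2 = (k+1) + 1 := rfl
  unfold alexBlock
  rw [if_pos e2, if_pos rfl]
  apply Matrix.ext; intro p q
  simp only [← e2]
  rw [tym_mul n k h]
  simp only [Matrix.add_apply, Matrix.sub_apply, Matrix.smul_apply, Matrix.one_apply,
    smul_eq_mul, Matrix.of_apply, Aex, tymρ]
  by_cases hp0 : (p:ℕ) = k
  · simp [hp0, Fin.ext_iff, show ¬(k+1 = k+2) from by omega, show ¬(k = k+2) from by omega,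
      show ¬(k = k+1) from by omega]
    split_ifs <;> first | ring1 | omega | (exfalso; omega)
  · by_cases hp1 : (p:ℕ) = k+1
    · simp [hp1, hp0, Fin.ext_iff, show k+1+1 = k+2 from rfl,
        show ¬(k+1 = k+2) from by omega, show ¬(k+1 = k) from by omega]
      split_ifs <;> first | ring1 | omega | (exfalso; omega)
    · by_cases hp2 : (p:ℕ) = k+2
      · simp [hp2, hp0, hp1, Fin.ext_iff, show ¬(k+2 = k+1) from by omega,
          show ¬(k+2+1 = k+2) from by omega, show ¬(k+2 = k) from by omega]
        split_ifs <;> first | ring1 | omega | (exfalso; omega)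
      · simp [hp0, hp1, hp2, Fin.ext_iff]
        split_ifs <;> first | ring1 | omega | (exfalso; omega)

def triEquiv (n k : ℕ) (h : k + 3 ≤ n) : (Fin 3 ⊕ Fin (n-3)) ≃ Fin n where
  toFun x := Sum.elim (fun j : Fin 3 => (⟨k + j, by omega⟩ : Fin n))
      (fun j : Fin (n-3) => if (j:ℕ) < k then ⟨j, by omega⟩ else ⟨(j:ℕ) + 3, by omega⟩) x
  invFun p := if h1 : (p:ℕ) < k then .inr ⟨p, by omega⟩
      else if h2 : (p:ℕ) < k+3 then .inl ⟨(p:ℕ) - k, by omega⟩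
      else .inr ⟨(p:ℕ) - 3, by omega⟩
  left_inv := by
    rintro (j | j)
    · simp only [Sum.elim_inl]
      split_ifs with h1 h2
      · exact absurd (show k + (j:ℕ) < k from h1) (by omega)
      · exact (dif_neg h1).trans ((dif_pos (show k + (j:ℕ) < k + 3 from by omega)).trans
          (congrArg Sum.inl (Fin.ext (show k + (j:ℕ) - k = (j:ℕ) from by omega))))
    · simp only [Sum.elim_inr]
      by_cases hj : (j:ℕ) < k
      · simp only [if_pos hj]
        rw [dif_pos hj]
      · simp only [if_neg hj]
        split_ifs with h1 h2
        · exact absurd (show (j:ℕ) + 3 < k from h1) (by omega)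
        · have h2' : (j:ℕ) + 3 < k + 3 := h2
          exact absurd hj (by omega)
        · exact congrArg Sum.inr (Fin.ext (show (j:ℕ) + 3 - 3 = (j:ℕ) from by omega))
  right_inv := by
    intro p
    dsimp only
    split_ifs with h1 h2
    · simp only [Sum.elim_inr]
      rw [if_pos (show (p:ℕ) < k from h1)]
    · simp only [Sum.elim_inl]
      have h1' : ¬ ((p:ℕ) < k) := h1
      exact Fin.ext (show k + ((p:ℕ) - k) = (p:ℕ) from by omega)
    · simp only [Sum.elim_inr]
      have h1' : ¬ ((p:ℕ) < k) := h1
      have h2' : ¬ ((p:ℕ) < k + 3) := h2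
      rw [if_neg (show ¬ ((p:ℕ) - 3 < k) from by omega)]
      exact Fin.ext (show (p:ℕ) - 3 + 3 = (p:ℕ) from by omega)

lemma detAex (n k : ℕ) (h : k + 3 ≤ n) :
    (Aex n k).det =
      (1 - zv) * (1 - tv * zv ^ 2) * (1 + tv * zv ^ 3) * (1 - zv + zv ^ 2) ^ (n - 3) := by
  rw [← Matrix.det_submatrix_equiv_self (triEquiv n k h) (Aex n k)]
  have hb : (Aex n k).submatrix (triEquiv n k h) (triEquiv n k h) =
      Matrix.fromBlocks
        !![1 - zv, 0, zv^2; tv*zv^2, 1, -zv; 0, tv*zv^2 - tv*zv, 1]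
        0 0 (Matrix.diagonal fun _ => 1 - zv + zv^2) := by
    apply Matrix.ext; intro i j
    rcases i with i | i <;> rcases j with j | j
    · fin_cases i <;> fin_cases j <;>
        simp [Aex, triEquiv, Matrix.submatrix, Matrix.fromBlocks] <;>
        first | rfl | omega | ring1 | (exfalso; omega)
    · fin_cases i <;>
        simp [Aex, triEquiv, Matrix.submatrix, Matrix.fromBlocks] <;>
        split_ifs <;> (try simp_all only [Fin.val_mk]) <;> first | rfl | omega | ring1 | (exfalso; omega)
    · fin_cases j <;>
        simp [Aex, triEquiv, Matrix.submatrix, Matrix.fromBlocks] <;>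
        split_ifs <;> (try simp_all only [Fin.val_mk]) <;> first | rfl | omega | ring1 | (exfalso; omega)
    · simp [Aex, triEquiv, Matrix.submatrix, Matrix.fromBlocks, Matrix.diagonal, Fin.ext_iff] <;>
        split_ifs <;> (try simp_all only [Fin.val_mk]) <;>
        first | rfl | omega | ring1 | (exfalso; omega) | simp_all
  rw [hb, Matrix.det_fromBlocks_zero₂₁, Matrix.det_diagonal, Finset.prod_const,
    Matrix.det_fin_three]
  simp [Finset.card_univ]
  try ring
  try exact Or.inl trivial

/-- Lemma 4.3 (i): choosing the rows of the `n-2` row-blocks `[1,2], [2,3], …, [n-2,n-1]`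
of the Alexander matrix `M_{n-1}`, the resulting maximal minor equals
`((1-z)(1-tz²)(1+tz³))^{n-2}·(1-z+z²)^{(n-3)(n-2)}`. -/
theorem det_minor_adjacent_blocks (n : ℕ) (hn : 4 ≤ n) :
    (((alexM n).submatrix
        (fun p : Fin (n - 2) × Fin n =>
          ((⟨(⟨(p.1 : ℕ), by omega⟩, ⟨(p.1 : ℕ) + 1, by omega⟩),
              Fin.mk_lt_mk.mpr (Nat.lt_succ_self _)⟩, p.2) : AlexRow n))
        id).det)
      = ((1 - zv) * (1 - tv * zv ^ 2) * (1 + tv * zv ^ 3)) ^ (n - 2)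
        * (1 - zv + zv ^ 2) ^ ((n - 3) * (n - 2)) := by
  set M := ((alexM n).submatrix
        (fun p : Fin (n - 2) × Fin n =>
          ((⟨(⟨(p.1 : ℕ), by omega⟩, ⟨(p.1 : ℕ) + 1, by omega⟩),
              Fin.mk_lt_mk.mpr (Nat.lt_succ_self _)⟩, p.2) : AlexRow n))
        id) with hM
  have hbt : M.BlockTriangular (fun p : Fin (n - 2) × Fin n => p.1) := by
    intro r c hlt
    have hv : (c.1 : ℕ) < (r.1 : ℕ) := hlt
    show alexBlock n ((r.1 : ℕ) + 1) (((r.1 : ℕ) + 1) + 1) ((c.1 : ℕ) + 1) r.2 c.2 = 0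
    unfold alexBlock
    rw [if_pos rfl, if_neg (by omega), if_neg (by omega)]
    rfl
  rw [hbt.det_fintype]
  have key : ∀ a : Fin (n - 2), (M.toSquareBlock (fun p => p.1) a).det
      = (1 - zv) * (1 - tv * zv ^ 2) * (1 + tv * zv ^ 3) * (1 - zv + zv ^ 2) ^ (n - 3) := by
    intro a
    have ha3 : (a : ℕ) + 3 ≤ n := by have := a.isLt; omega
    let ea : Fin n ≃ {p : Fin (n - 2) × Fin n // p.1 = a} :=
      { toFun := fun q => ⟨(a, q), rfl⟩
        invFun := fun p => p.1.2
        left_inv := fun q => rfl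
        right_inv := by rintro ⟨⟨x, y⟩, rfl⟩; rfl }
    rw [← Matrix.det_submatrix_equiv_self ea]
    have hsub : (M.toSquareBlock (fun p => p.1) a).submatrix ea ea = Aex n (a : ℕ) := by
      apply Matrix.ext; intro p q
      show alexBlock n ((a : ℕ) + 1) ((a : ℕ) + 2) ((a : ℕ) + 1) p q = Aex n (a : ℕ) p q
      rw [blockA n (a : ℕ) ha3]
    rw [hsub, detAex n (a : ℕ) ha3]
  simp only [key, Finset.prod_const, Finset.card_univ, Fintype.card_fin]
  rw [mul_pow, ← pow_mul]
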